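/- arXiv:2110.05897 — 9 statements merged into one kernel-verified Lean document; each statement's English description precedes it below -/
import Mathlib

section
/- Let b₁ = (1/k) Σ_{l=1}^k p_{1,l} and b₂ = (1/k) Σ_{l=1}^k p_{2,l} be barycenters of two k-tuples of points in ℝ^D, with weights w(bᵢ) = −(1/k) Σ_l ‖bᵢ − p_{i,l}‖². Then the power distance D(b̂₁, b̂₂) := ‖b₁ − b₂‖² − w(b₁) − w(b₂) equals (1/k²) Σ_{l,s=1}^k ‖p_{1,l} − p_{2,s}‖². -/
open Finset

local notation "⟪" x ", " y "⟫" => @inner ℝ _ _ x y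

theorem stmt_3 {D k : ℕ} (hk : 0 < k)
    (p₁ p₂ : Fin k → EuclideanSpace ℝ (Fin D))
    (b₁ b₂ : EuclideanSpace ℝ (Fin D))
    (hb₁ : b₁ = (1 / (k : ℝ)) • ∑ l, p₁ l)
    (hb₂ : b₂ = (1 / (k : ℝ)) • ∑ l, p₂ l)
    (w₁ w₂ : ℝ)
    (hw₁ : w₁ = -((1 / (k : ℝ)) * ∑ l, ‖b₁ - p₁ l‖ ^ 2))
    (hw₂ : w₂ = -((1 / (k : ℝ)) * ∑ l, ‖b₂ - p₂ l‖ ^ 2)) :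
    ‖b₁ - b₂‖ ^ 2 - w₁ - w₂ =
      (1 / (k : ℝ) ^ 2) * ∑ l, ∑ s, ‖p₁ l - p₂ s‖ ^ 2 := by
  have hk' : (k : ℝ) ≠ 0 := Nat.cast_ne_zero.mpr hk.ne'
  have hs1 : ∑ l, p₁ l = (k : ℝ) • b₁ := by
    rw [hb₁, smul_smul]; field_simp; exact (one_smul _ _).symm
  have hs2 : ∑ l, p₂ l = (k : ℝ) • b₂ := by
    rw [hb₂, smul_smul]; field_simp; exact (one_smul _ _).symm
  have e1 : ∑ l, ‖b₁ - p₁ l‖ ^ 2 = (∑ l, ‖p₁ l‖ ^ 2) - (k : ℝ) * ‖b₁‖ ^ 2 := by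
    have h : ∀ l, ‖b₁ - p₁ l‖ ^ 2 = ‖b₁‖ ^ 2 - 2 * ⟪b₁, p₁ l⟫ + ‖p₁ l‖ ^ 2 :=
      fun l => norm_sub_sq_real _ _
    simp only [h, Finset.sum_add_distrib, Finset.sum_sub_distrib, ← Finset.mul_sum,
      ← inner_sum, hs1, inner_smul_right, real_inner_self_eq_norm_sq, Finset.sum_const,
      card_univ, Fintype.card_fin, nsmul_eq_mul]
    ring
  have e2 : ∑ l, ‖b₂ - p₂ l‖ ^ 2 = (∑ l, ‖p₂ l‖ ^ 2) - (k : ℝ) * ‖b₂‖ ^ 2 := by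
    have h : ∀ l, ‖b₂ - p₂ l‖ ^ 2 = ‖b₂‖ ^ 2 - 2 * ⟪b₂, p₂ l⟫ + ‖p₂ l‖ ^ 2 :=
      fun l => norm_sub_sq_real _ _
    simp only [h, Finset.sum_add_distrib, Finset.sum_sub_distrib, ← Finset.mul_sum,
      ← inner_sum, hs2, inner_smul_right, real_inner_self_eq_norm_sq, Finset.sum_const,
      card_univ, Fintype.card_fin, nsmul_eq_mul]
    ring
  have hin : ∑ l, ∑ s, ⟪p₁ l, p₂ s⟫ = (k : ℝ) ^ 2 * ⟪b₁, b₂⟫ := by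
    have h0 : ⟪∑ l, p₁ l, ∑ s, p₂ s⟫ = ∑ l, ∑ s, ⟪p₁ l, p₂ s⟫ := by
      simp only [sum_inner, inner_sum]; exact Finset.sum_comm
    rw [← h0, hs1, hs2, inner_smul_left, inner_smul_right, RCLike.conj_to_real]
    ring
  have e3 : ∑ l, ∑ s, ‖p₁ l - p₂ s‖ ^ 2
      = (k : ℝ) * (∑ l, ‖p₁ l‖ ^ 2) + (k : ℝ) * (∑ s, ‖p₂ s‖ ^ 2)
        - 2 * ((k : ℝ) ^ 2 * ⟪b₁, b₂⟫) := by
    have h : ∀ l s, ‖p₁ l - p₂ s‖ ^ 2 = ‖p₁ l‖ ^ 2 - 2 * ⟪p₁ l, p₂ s⟫ + ‖p₂ s‖ ^ 2 :=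
      fun l s => norm_sub_sq_real _ _
    rw [← hin]
    simp only [h, Finset.sum_add_distrib, Finset.sum_sub_distrib, ← Finset.mul_sum,
      Finset.sum_const, card_univ, Fintype.card_fin, nsmul_eq_mul]
    ring
  have e0 : ‖b₁ - b₂‖ ^ 2 = ‖b₁‖ ^ 2 - 2 * ⟪b₁, b₂⟫ + ‖b₂‖ ^ 2 := norm_sub_sq_real _ _
  rw [hw₁, hw₂, e0, e1, e2, e3]
  field_simp
  ring
end

section
/- Let X̂ = {(pᵢ, wᵢ)} be weighted points in ℝ^D, c = c(X̂) its weighted center, I the set of indices with D(c,(pᵢ,wᵢ)) = rad²(X̂), and λᵢ > 0 (i ∈ I), Σλᵢ = 1 with c = Σ_{i∈I} λᵢ pᵢ. Then rad²(X̂) = (1/2) Σ_{i,j∈I} λᵢ λⱼ D((pᵢ,wᵢ),(pⱼ,wⱼ)), where D((pᵢ,wᵢ),(pⱼ,wⱼ)) = ‖pᵢ − pⱼ‖² − wᵢ − wⱼ. -/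
open Finset

theorem stmt_7 {D m : ℕ}
    (p : Fin m → EuclideanSpace ℝ (Fin D)) (w : Fin m → ℝ)
    (hne : (Finset.univ : Finset (Fin m)).Nonempty)
    (c : EuclideanSpace ℝ (Fin D))
    (hc : ∀ y, Finset.univ.sup' hne (fun i => ‖c - p i‖ ^ 2 - w i) ≤
          Finset.univ.sup' hne (fun i => ‖y - p i‖ ^ 2 - w i))
    (I : Finset (Fin m))
    (hI : I = Finset.univ.filter (fun i =>
      ‖c - p i‖ ^ 2 - w i = Finset.univ.sup' hne (fun j => ‖c - p j‖ ^ 2 - w j)))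
    (lam : Fin m → ℝ) (hpos : ∀ i ∈ I, 0 < lam i)
    (hsum : ∑ i ∈ I, lam i = 1) (hcc : c = ∑ i ∈ I, lam i • p i) :
    Finset.univ.sup' hne (fun i => ‖c - p i‖ ^ 2 - w i) =
      (1 / 2) * ∑ i ∈ I, ∑ j ∈ I, lam i * lam j * (‖p i - p j‖ ^ 2 - w i - w j) := by
  set R := Finset.univ.sup' hne (fun i => ‖c - p i‖ ^ 2 - w i) with hR
  have key : ∀ i ∈ I, ‖p i - c‖ ^ 2 - w i = R := by
    intro i hi
    rw [norm_sub_rev]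
    subst hI
    exact (Finset.mem_filter.mp hi).2
  have hz : ∑ i ∈ I, lam i • (p i - c) = 0 := by
    simp only [smul_sub]
    rw [Finset.sum_sub_distrib, ← Finset.sum_smul, hsum, one_smul, ← hcc, sub_self]
  have hinner : ∑ i ∈ I, ∑ j ∈ I, lam i * lam j *
      (inner ℝ (p i - c) (p j - c) : ℝ) = 0 := by
    have : ∑ i ∈ I, ∑ j ∈ I, lam i * lam j * (inner ℝ (p i - c) (p j - c) : ℝ)
        = (inner ℝ (∑ i ∈ I, lam i • (p i - c)) (∑ j ∈ I, lam j • (p j - c)) : ℝ) := by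
      rw [sum_inner]
      refine Finset.sum_congr rfl fun i _ => ?_
      rw [inner_sum]
      refine Finset.sum_congr rfl fun j _ => ?_
      rw [real_inner_smul_left, real_inner_smul_right]
      ring
    rw [this, hz, inner_zero_left]
  have expand : ∀ i j : Fin m, ‖p i - p j‖ ^ 2 =
      ‖p i - c‖ ^ 2 + ‖p j - c‖ ^ 2 - 2 * (inner ℝ (p i - c) (p j - c) : ℝ) := by
    intro i j
    have h : p i - p j = (p i - c) - (p j - c) := by abel
    rw [h, norm_sub_sq_real]
    ring
  have step : ∑ i ∈ I, ∑ j ∈ I, lam i * lam j * (‖p i - p j‖ ^ 2 - w i - w j)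
      = ∑ i ∈ I, ∑ j ∈ I, (lam i * lam j * R + lam i * lam j * R
          - 2 * (lam i * lam j * (inner ℝ (p i - c) (p j - c) : ℝ))) := by
    refine Finset.sum_congr rfl fun i hi => Finset.sum_congr rfl fun j hj => ?_
    rw [expand i j]
    have hiR : ‖p i - c‖ ^ 2 = R + w i := by linarith [key i hi]
    have hjR : ‖p j - c‖ ^ 2 = R + w j := by linarith [key j hj]
    rw [hiR, hjR]
    ring
  rw [step]
  simp only [Finset.sum_add_distrib, Finset.sum_sub_distrib, ← Finset.mul_sum,
    ← Finset.sum_mul]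
  rw [hinner, hsum]
  ring
end

section
/- Let P ⊂ ℝ^D be finite and let X̂ = {b̂₁,…,b̂_m} where each bᵢ is the barycenter of a k-subset Sᵢ ⊆ P with weight w(bᵢ) = −(1/k)Σ_{p∈Sᵢ}‖bᵢ − p‖². Suppose f : ℝ^D → ℝ^d is linear with (1−ε)‖x−y‖² ≤ ‖f(x)−f(y)‖² ≤ (1+ε)‖x−y‖² for all x,y ∈ P. Then the pairwise power distances satisfy (1−ε) D(b̂ᵢ, b̂ⱼ) ≤ D(f(bᵢ)^, f(bⱼ)^) ≤ (1+ε) D(b̂ᵢ, b̂ⱼ) for all i, j, where the weights in the image are recomputed from the image points f(Sᵢ). -/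
open Finset

lemma aux_power {E : Type*} [NormedAddCommGroup E] [InnerProductSpace ℝ E] {ι : Type*}
    {k : ℕ} (hk0 : 0 < k) (q : ι → E) (S₁ S₂ : Finset ι)
    (h₁ : S₁.card = k) (h₂ : S₂.card = k)
    (b₁ b₂ : E) (hb₁ : b₁ = (1 / (k : ℝ)) • ∑ i ∈ S₁, q i)
    (hb₂ : b₂ = (1 / (k : ℝ)) • ∑ i ∈ S₂, q i) :
    ‖b₁ - b₂‖ ^ 2 + (1 / (k : ℝ)) * ∑ i ∈ S₁, ‖b₁ - q i‖ ^ 2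
      + (1 / (k : ℝ)) * ∑ j ∈ S₂, ‖b₂ - q j‖ ^ 2
    = (1 / (k : ℝ) ^ 2) * ∑ i ∈ S₁, ∑ j ∈ S₂, ‖q i - q j‖ ^ 2 := by
  have hkR : (0:ℝ) < (k:ℝ) := by exact_mod_cast hk0
  have hkne : (k:ℝ) ≠ 0 := ne_of_gt hkR
  have hsum₁ : ∑ i ∈ S₁, (q i - b₁) = 0 := by
    rw [Finset.sum_sub_distrib, Finset.sum_const, h₁, hb₁, ← Nat.cast_smul_eq_nsmul ℝ,
      smul_smul]
    field_simp
    rw [one_smul, sub_self]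
  have hsum₂ : ∑ j ∈ S₂, (q j - b₂) = 0 := by
    rw [Finset.sum_sub_distrib, Finset.sum_const, h₂, hb₂, ← Nat.cast_smul_eq_nsmul ℝ,
      smul_smul]
    field_simp
    rw [one_smul, sub_self]
  have expand : ∀ x y v : E, ‖x - y + v‖ ^ 2 =
      ‖x‖^2 + ‖y‖^2 + ‖v‖^2 - 2 * inner ℝ x y + 2 * inner ℝ x v - 2 * inner ℝ y v := by
    intro x y v
    rw [norm_add_sq_real, norm_sub_sq_real, inner_sub_left]
    ring
  have e2 : ∑ i ∈ S₁, (inner ℝ (q i - b₁) (b₁ - b₂) : ℝ) = 0 := by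
    rw [← sum_inner, hsum₁, inner_zero_left]
  have e3 : ∑ j ∈ S₂, (inner ℝ (q j - b₂) (b₁ - b₂) : ℝ) = 0 := by
    rw [← sum_inner, hsum₂, inner_zero_left]
  have inner_row : ∀ i, ∑ j ∈ S₂, (inner ℝ (q i - b₁) (q j - b₂) : ℝ) = 0 := by
    intro i; rw [← inner_sum, hsum₂, inner_zero_right]
  have row : ∀ i ∈ S₁, ∑ j ∈ S₂, ‖q i - q j‖ ^ 2
      = (k:ℝ) * ‖q i - b₁‖^2 + ∑ j ∈ S₂, ‖q j - b₂‖^2 + (k:ℝ) * ‖b₁ - b₂‖^2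
        + 2 * (k:ℝ) * inner ℝ (q i - b₁) (b₁ - b₂) := by
    intro i _
    have hterm : ∀ j ∈ S₂, ‖q i - q j‖ ^ 2 =
        ‖q i - b₁‖^2 + ‖q j - b₂‖^2 + ‖b₁ - b₂‖^2
          - 2 * inner ℝ (q i - b₁) (q j - b₂) + 2 * inner ℝ (q i - b₁) (b₁ - b₂)
          - 2 * inner ℝ (q j - b₂) (b₁ - b₂) := by
      intro j _
      have h : q i - q j = (q i - b₁) - (q j - b₂) + (b₁ - b₂) := by abel
      rw [h, expand]
    rw [Finset.sum_congr rfl hterm]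
    simp only [Finset.sum_add_distrib, Finset.sum_sub_distrib, Finset.sum_const,
      nsmul_eq_mul, ← Finset.mul_sum, h₂, inner_row i, e3]
    ring
  have key : ∑ i ∈ S₁, ∑ j ∈ S₂, ‖q i - q j‖ ^ 2
      = (k:ℝ) * ∑ i ∈ S₁, ‖q i - b₁‖^2 + (k:ℝ) * ∑ j ∈ S₂, ‖q j - b₂‖^2
        + (k:ℝ)^2 * ‖b₁ - b₂‖^2 := by
    rw [Finset.sum_congr rfl row]
    simp only [Finset.sum_add_distrib, Finset.sum_const, nsmul_eq_mul, ← Finset.mul_sum,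
      h₁, e2]
    ring
  have hn₁ : ∑ i ∈ S₁, ‖b₁ - q i‖^2 = ∑ i ∈ S₁, ‖q i - b₁‖^2 := by
    simp [norm_sub_rev]
  have hn₂ : ∑ j ∈ S₂, ‖b₂ - q j‖^2 = ∑ j ∈ S₂, ‖q j - b₂‖^2 := by
    simp [norm_sub_rev]
  rw [hn₁, hn₂, key]
  field_simp
  ring
theorem stmt_10 {D d n k : ℕ} (hk0 : 0 < k) (ε : ℝ) (hε0 : 0 < ε) (hε1 : ε < 1)
    (p : Fin n → EuclideanSpace ℝ (Fin D))
    (f : EuclideanSpace ℝ (Fin D) →ₗ[ℝ] EuclideanSpace ℝ (Fin d))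
    (hf : ∀ i j : Fin n,
      (1 - ε) * ‖p i - p j‖ ^ 2 ≤ ‖f (p i) - f (p j)‖ ^ 2 ∧
      ‖f (p i) - f (p j)‖ ^ 2 ≤ (1 + ε) * ‖p i - p j‖ ^ 2)
    (S₁ S₂ : Finset (Fin n)) (hS₁ : S₁.card = k) (hS₂ : S₂.card = k)
    -- barycenters and weights in the original space
    (b₁ b₂ : EuclideanSpace ℝ (Fin D))
    (hb₁ : b₁ = (1 / (k : ℝ)) • ∑ i ∈ S₁, p i)
    (hb₂ : b₂ = (1 / (k : ℝ)) • ∑ i ∈ S₂, p i)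
    (w₁ w₂ : ℝ)
    (hw₁ : w₁ = -((1 / (k : ℝ)) * ∑ i ∈ S₁, ‖b₁ - p i‖ ^ 2))
    (hw₂ : w₂ = -((1 / (k : ℝ)) * ∑ i ∈ S₂, ‖b₂ - p i‖ ^ 2))
    -- barycenters and recomputed weights in the image space
    (b₁' b₂' : EuclideanSpace ℝ (Fin d))
    (hb₁' : b₁' = (1 / (k : ℝ)) • ∑ i ∈ S₁, f (p i))
    (hb₂' : b₂' = (1 / (k : ℝ)) • ∑ i ∈ S₂, f (p i))
    (w₁' w₂' : ℝ)
    (hw₁' : w₁' = -((1 / (k : ℝ)) * ∑ i ∈ S₁, ‖b₁' - f (p i)‖ ^ 2))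
    (hw₂' : w₂' = -((1 / (k : ℝ)) * ∑ i ∈ S₂, ‖b₂' - f (p i)‖ ^ 2)) :
    (1 - ε) * (‖b₁ - b₂‖ ^ 2 - w₁ - w₂) ≤ ‖b₁' - b₂'‖ ^ 2 - w₁' - w₂' ∧
    ‖b₁' - b₂'‖ ^ 2 - w₁' - w₂' ≤ (1 + ε) * (‖b₁ - b₂‖ ^ 2 - w₁ - w₂) := by
  have hkR : (0:ℝ) < (k:ℝ) := by exact_mod_cast hk0
  have hD : ‖b₁ - b₂‖ ^ 2 - w₁ - w₂
      = (1 / (k : ℝ) ^ 2) * ∑ i ∈ S₁, ∑ j ∈ S₂, ‖p i - p j‖ ^ 2 := by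
    rw [hw₁, hw₂, ← aux_power hk0 p S₁ S₂ hS₁ hS₂ b₁ b₂ hb₁ hb₂]
    ring
  have hD' : ‖b₁' - b₂'‖ ^ 2 - w₁' - w₂'
      = (1 / (k : ℝ) ^ 2) * ∑ i ∈ S₁, ∑ j ∈ S₂, ‖f (p i) - f (p j)‖ ^ 2 := by
    rw [hw₁', hw₂', ← aux_power hk0 (fun i => f (p i)) S₁ S₂ hS₁ hS₂ b₁' b₂' hb₁' hb₂']
    ring
  have hpos : (0:ℝ) ≤ 1 / (k : ℝ) ^ 2 := by positivity
  constructor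
  · rw [hD, hD', mul_left_comm]
    apply mul_le_mul_of_nonneg_left _ hpos
    rw [Finset.mul_sum]
    refine Finset.sum_le_sum fun i _ => ?_
    rw [Finset.mul_sum]
    exact Finset.sum_le_sum fun j _ => (hf i j).1
  · rw [hD, hD', mul_left_comm]
    apply mul_le_mul_of_nonneg_left _ hpos
    rw [Finset.mul_sum]
    refine Finset.sum_le_sum fun i _ => ?_
    rw [Finset.mul_sum]
    exact Finset.sum_le_sum fun j _ => (hf i j).2
end

section
/- Let σ̂ = {b̂₁,…,b̂_m} be weighted barycenters of k-subsets of a finite point set P ⊂ ℝ^D (with weights w(bᵢ) = −(1/k)Σ_{p∈Sᵢ}‖bᵢ−p‖²), and let f : ℝ^D → ℝ^d be a linear map satisfying (1−ε)‖x−y‖² ≤ ‖f(x)−f(y)‖² ≤ (1+ε)‖x−y‖² for all x,y ∈ P. Then (1−ε)·rad²(σ̂) ≤ rad²(f(σ)^) ≤ (1+ε)·rad²(σ̂), where rad²(Ŷ) = min_x max_i D(x, ŷᵢ) and the image weights are recomputed from the image points. -/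
open Finset

section Aux

variable {n m : ℕ} {E : Type*} [NormedAddCommGroup E] [InnerProductSpace ℝ E]

lemma bary_identity (q : Fin n → E) (μ : Fin n → ℝ) (hμ : ∑ l, μ l = 1) (x : E) :
    ∑ l, μ l * ‖x - q l‖ ^ 2 =
      ‖x - ∑ l', μ l' • q l'‖ ^ 2 + ∑ l, μ l * ‖(∑ l', μ l' • q l') - q l‖ ^ 2 := by
  set c := ∑ l', μ l' • q l' with hc
  have key : ∑ l, μ l • (c - q l) = (0 : E) := by
    simp only [smul_sub, Finset.sum_sub_distrib]
    rw [← Finset.sum_smul, hμ, one_smul]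
    simp [hc]
  have h1 : ∀ l, ‖x - q l‖ ^ 2
      = ‖x - c‖ ^ 2 + 2 * (inner ℝ (x - c) (c - q l) : ℝ) + ‖c - q l‖ ^ 2 := by
    intro l
    rw [show x - q l = (x - c) + (c - q l) by abel]
    exact norm_add_sq_real _ _
  have h2 : ∑ l, μ l * (2 * (inner ℝ (x - c) (c - q l) : ℝ)) = 0 := by
    have hz : (inner ℝ (x - c) (∑ l, μ l • (c - q l)) : ℝ) = 0 := by rw [key]; simp
    rw [inner_sum] at hz
    simp only [real_inner_smul_right] at hz
    calc ∑ l, μ l * (2 * (inner ℝ (x - c) (c - q l) : ℝ))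
        = 2 * ∑ l, μ l * (inner ℝ (x - c) (c - q l) : ℝ) := by
          rw [Finset.mul_sum]; exact Finset.sum_congr rfl fun l _ => by ring
      _ = 0 := by rw [hz]; ring
  calc ∑ l, μ l * ‖x - q l‖ ^ 2
      = ∑ l, (μ l * ‖x - c‖ ^ 2 + μ l * (2 * (inner ℝ (x-c) (c - q l):ℝ)) + μ l * ‖c - q l‖ ^ 2) := by
        refine Finset.sum_congr rfl fun l _ => ?_
        rw [h1 l]; ring
    _ = (∑ l, μ l * ‖x - c‖ ^ 2) + (∑ l, μ l * (2 * (inner ℝ (x-c) (c - q l):ℝ)))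
        + ∑ l, μ l * ‖c - q l‖ ^ 2 := by rw [Finset.sum_add_distrib, Finset.sum_add_distrib]
    _ = ‖x - c‖ ^ 2 + ∑ l, μ l * ‖c - q l‖ ^ 2 := by
        rw [h2, ← Finset.sum_mul, hμ]; ring

noncomputable def pairG (q : Fin n → E) (μ : Fin n → ℝ) : ℝ :=
  (1/2) * ∑ l, ∑ l', μ l * μ l' * ‖q l - q l'‖ ^ 2

lemma variance_eq_pairG (q : Fin n → E) (μ : Fin n → ℝ) (hμ : ∑ l, μ l = 1) :
    ∑ l, μ l * ‖(∑ l', μ l' • q l') - q l‖ ^ 2 = pairG q μ := by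
  set c := ∑ l', μ l' • q l' with hc
  set V := ∑ l, μ l * ‖c - q l‖ ^ 2 with hV
  have h1 : ∀ l, ∑ l', μ l' * ‖q l - q l'‖ ^ 2 = ‖q l - c‖ ^ 2 + V :=
    fun l => bary_identity q μ hμ (q l)
  have h2 : ∑ l, ∑ l', μ l * μ l' * ‖q l - q l'‖ ^ 2 = 2 * V := by
    calc ∑ l, ∑ l', μ l * μ l' * ‖q l - q l'‖ ^ 2
        = ∑ l, μ l * ∑ l', μ l' * ‖q l - q l'‖ ^ 2 := by
          refine Finset.sum_congr rfl fun l _ => ?_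
          rw [Finset.mul_sum]; exact Finset.sum_congr rfl fun l' _ => by ring
      _ = ∑ l, μ l * (‖q l - c‖ ^ 2 + V) := by
          exact Finset.sum_congr rfl fun l _ => by rw [h1 l]
      _ = (∑ l, μ l * ‖c - q l‖ ^ 2) + (∑ l, μ l) * V := by
          rw [Finset.sum_mul]
          rw [← Finset.sum_add_distrib]
          exact Finset.sum_congr rfl fun l _ => by rw [norm_sub_rev]; ring
      _ = 2 * V := by rw [hμ, hV]; ring
  rw [pairG, h2]; ring


lemma duality (hm : 0 < m) (hne : (Finset.univ : Finset (Fin m)).Nonempty)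
    (q : Fin n → E) (ν : Fin m → Fin n → ℝ)
    (hν0 : ∀ i l, 0 ≤ ν i l) (hν1 : ∀ i, ∑ l, ν i l = 1) :
    ∃ lam ∈ stdSimplex ℝ (Fin m),
      (⨅ x : E, Finset.univ.sup' hne (fun i => ∑ l, ν i l * ‖x - q l‖ ^ 2))
        = pairG q (fun l => ∑ i, lam i * ν i l) ∧
      ∀ lam' ∈ stdSimplex ℝ (Fin m),
        pairG q (fun l => ∑ i, lam' i * ν i l) ≤ pairG q (fun l => ∑ i, lam i * ν i l) := by
  classical
  set mix : (Fin m → ℝ) → Fin n → ℝ := fun lam l => ∑ i, lam i * ν i l with hmix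
  have hmixsum : ∀ lam ∈ stdSimplex ℝ (Fin m), ∑ l, mix lam l = 1 := by
    intro lam hlam
    rw [hmix]
    rw [Finset.sum_comm]
    simp_rw [← Finset.mul_sum]
    simp_rw [hν1]
    simpa using hlam.2
  have hmixnn : ∀ lam ∈ stdSimplex ℝ (Fin m), ∀ l, 0 ≤ mix lam l := by
    intro lam hlam l
    exact Finset.sum_nonneg fun i _ => mul_nonneg (hlam.1 i) (hν0 i l)
  set Gf : (Fin m → ℝ) → ℝ := fun lam => pairG q (mix lam) with hGf
  have hcont : Continuous Gf := by
    show Continuous fun lam : Fin m → ℝ =>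
      (1/2 : ℝ) * ∑ l, ∑ l', (∑ i, lam i * ν i l) * (∑ i, lam i * ν i l') * ‖q l - q l'‖ ^ 2
    fun_prop
  -- a point of the simplex
  have hvertmem : (fun j => if j = (⟨0, hm⟩ : Fin m) then (1:ℝ) else 0) ∈ stdSimplex ℝ (Fin m) := by
    constructor
    · intro j; dsimp; split <;> norm_num
    · simp
  obtain ⟨lam, hlammem, hmax⟩ :=
    (isCompact_stdSimplex ℝ (Fin m)).exists_isMaxOn ⟨_, hvertmem⟩ hcont.continuousOn
  have hmax' : ∀ y ∈ stdSimplex ℝ (Fin m), Gf y ≤ Gf lam := hmax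
  -- weak duality
  have hweak : ∀ lam' ∈ stdSimplex ℝ (Fin m), ∀ x : E,
      Gf lam' ≤ Finset.univ.sup' hne (fun i => ∑ l, ν i l * ‖x - q l‖ ^ 2) := by
    intro lam' hlam' x
    have h1 : Gf lam' ≤ ∑ l, mix lam' l * ‖x - q l‖ ^ 2 := by
      show pairG q (mix lam') ≤ _
      rw [← variance_eq_pairG q (mix lam') (hmixsum lam' hlam')]
      rw [bary_identity q (mix lam') (hmixsum lam' hlam') x]
      nlinarith [sq_nonneg ‖x - ∑ l', mix lam' l' • q l'‖]
    have h2 : ∑ l, mix lam' l * ‖x - q l‖ ^ 2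
        = ∑ i, lam' i * ∑ l, ν i l * ‖x - q l‖ ^ 2 := by
      show ∑ l, (∑ i, lam' i * ν i l) * ‖x - q l‖ ^ 2 = _
      simp_rw [Finset.sum_mul, Finset.mul_sum]
      rw [Finset.sum_comm]
      exact Finset.sum_congr rfl fun i _ => Finset.sum_congr rfl fun l _ => by ring
    have h3 : ∑ i, lam' i * ∑ l, ν i l * ‖x - q l‖ ^ 2
        ≤ ∑ i, lam' i * Finset.univ.sup' hne (fun i => ∑ l, ν i l * ‖x - q l‖ ^ 2) := by
      refine Finset.sum_le_sum fun i _ => ?_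
      exact mul_le_mul_of_nonneg_left
        (Finset.le_sup' (fun i => ∑ l, ν i l * ‖x - q l‖ ^ 2) (Finset.mem_univ i)) (hlam'.1 i)
    rw [← Finset.sum_mul, hlam'.2, one_mul] at h3
    calc Gf lam' ≤ ∑ l, mix lam' l * ‖x - q l‖ ^ 2 := h1
      _ = ∑ i, lam' i * ∑ l, ν i l * ‖x - q l‖ ^ 2 := h2
      _ ≤ _ := h3
  -- strong duality
  set xs : E := ∑ l', mix lam l' • q l' with hxs
  have hVs : ∑ l, mix lam l * ‖xs - q l‖ ^ 2 = Gf lam :=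
    variance_eq_pairG q (mix lam) (hmixsum lam hlammem)
  have hstrong : ∀ i : Fin m, ∑ l, ν i l * ‖xs - q l‖ ^ 2 ≤ Gf lam := by
    intro i
    set Di := ∑ l, ν i l * ‖xs - q l‖ ^ 2 with hDi
    set bi : E := ∑ l, ν i l • q l with hbi
    set C := ‖xs - bi‖ ^ 2 with hC
    have hC0 : 0 ≤ C := sq_nonneg _
    have key : ∀ t : ℝ, 0 < t → t ≤ 1 → Di ≤ Gf lam + t * C := by
      intro t ht0 ht1
      set lamt : Fin m → ℝ := fun j => (1 - t) * lam j + t * (if j = i then 1 else 0) with hlamt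
      have hlamtmem : lamt ∈ stdSimplex ℝ (Fin m) := by
        constructor
        · intro j
          have := hlammem.1 j
          dsimp [lamt]
          split <;> nlinarith
        · show ∑ j, ((1 - t) * lam j + t * (if j = i then 1 else 0)) = 1
          rw [Finset.sum_add_distrib, ← Finset.mul_sum, ← Finset.mul_sum, hlammem.2]
          simp
      have hmixt : ∀ l, mix lamt l = (1 - t) * mix lam l + t * ν i l := by
        intro l
        show ∑ j, ((1 - t) * lam j + t * (if j = i then 1 else 0)) * ν j l = _
        rw [show (∑ j, ((1 - t) * lam j + t * (if j = i then 1 else 0)) * ν j l)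
            = ∑ j, ((1-t) * (lam j * ν j l) + t * ((if j = i then 1 else 0) * ν j l)) from
            Finset.sum_congr rfl fun j _ => by ring]
        rw [Finset.sum_add_distrib, ← Finset.mul_sum, ← Finset.mul_sum]
        congr 2
        simp
      have hbaryt : ∑ l', mix lamt l' • q l' = (1 - t) • xs + t • bi := by
        rw [hxs, hbi, Finset.smul_sum, Finset.smul_sum, ← Finset.sum_add_distrib]
        refine Finset.sum_congr rfl fun l _ => ?_
        rw [hmixt l, add_smul, mul_smul, mul_smul]
      have hA1 : ∑ l, mix lamt l * ‖xs - q l‖ ^ 2 = (1 - t) * Gf lam + t * Di := by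
        rw [← hVs, hDi, Finset.mul_sum, Finset.mul_sum, ← Finset.sum_add_distrib]
        refine Finset.sum_congr rfl fun l _ => ?_
        rw [hmixt l]; ring
      have hA2 : ∑ l, mix lamt l * ‖xs - q l‖ ^ 2
          = ‖xs - ((1 - t) • xs + t • bi)‖ ^ 2 + Gf lamt := by
        have := bary_identity q (mix lamt) (hmixsum lamt hlamtmem) xs
        rw [hbaryt] at this
        rw [this]
        congr 1
        have hv := variance_eq_pairG q (mix lamt) (hmixsum lamt hlamtmem)
        rw [hbaryt] at hv
        exact hv
      have hnorm : ‖xs - ((1 - t) • xs + t • bi)‖ ^ 2 = t ^ 2 * C := by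
        have : xs - ((1 - t) • xs + t • bi) = t • (xs - bi) := by module
        rw [this, norm_smul, Real.norm_eq_abs, mul_pow, sq_abs, hC]
      have hGle : Gf lamt ≤ Gf lam := hmax' lamt hlamtmem
      have hcomb : (1 - t) * Gf lam + t * Di ≤ t ^ 2 * C + Gf lam := by
        rw [← hA1, hA2, hnorm]; linarith
      have ht' : t * Di ≤ t * (Gf lam + t * C) := by nlinarith
      exact le_of_mul_le_mul_left ht' ht0
    -- conclude Di ≤ Gf lam
    refine le_of_forall_pos_le_add fun ε hε => ?_
    have hct : 0 < C + 1 := by linarith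
    set t := min 1 (ε / (C + 1)) with htdef
    have ht0 : 0 < t := lt_min one_pos (div_pos hε hct)
    have ht1 : t ≤ 1 := min_le_left _ _
    have h := key t ht0 ht1
    have htC : t * C ≤ ε := by
      have h1 : t ≤ ε / (C + 1) := min_le_right _ _
      have h2 : t * C ≤ (ε / (C + 1)) * C := mul_le_mul_of_nonneg_right h1 hC0
      have h3 : (ε / (C + 1)) * C ≤ ε := by
        rw [div_mul_eq_mul_div, div_le_iff₀ hct]
        nlinarith
      linarith
    linarith
  refine ⟨lam, hlammem, ?_, fun lam' hlam' => hmax' lam' hlam'⟩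
  -- the infimum equals Gf lam
  have hbdd : BddBelow (Set.range fun x : E =>
      Finset.univ.sup' hne (fun i => ∑ l, ν i l * ‖x - q l‖ ^ 2)) := by
    refine ⟨0, ?_⟩
    rintro r ⟨x, rfl⟩
    refine le_trans ?_ (Finset.le_sup' _ (Finset.mem_univ (⟨0, hm⟩ : Fin m)))
    exact Finset.sum_nonneg fun l _ => mul_nonneg (hν0 _ l) (sq_nonneg _)
  refine le_antisymm ?_ (le_ciInf fun x => hweak lam hlammem x)
  refine ciInf_le_of_le hbdd xs ?_
  exact Finset.sup'_le _ _ fun i _ => hstrong i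

end Aux

/-- The squared radius of the smallest enclosing ball of a finite family of
weighted points: the infimum over centers of the maximum power distance. -/
noncomputable def rad2 {E : Type*} [NormedAddCommGroup E] {m : ℕ} (hm : 0 < m)
    (p : Fin m → E) (w : Fin m → ℝ) : ℝ :=
  ⨅ x : E, Finset.univ.sup' (Finset.univ_nonempty_iff.mpr ⟨⟨0, hm⟩⟩)
    (fun i => ‖x - p i‖ ^ 2 - w i)

theorem stmt_11 {D d n k m : ℕ} (hk0 : 0 < k) (hm : 0 < m)
    (ε : ℝ) (hε0 : 0 < ε) (hε1 : ε < 1)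
    (p : Fin n → EuclideanSpace ℝ (Fin D))
    (f : EuclideanSpace ℝ (Fin D) →ₗ[ℝ] EuclideanSpace ℝ (Fin d))
    (hf : ∀ i j : Fin n,
      (1 - ε) * ‖p i - p j‖ ^ 2 ≤ ‖f (p i) - f (p j)‖ ^ 2 ∧
      ‖f (p i) - f (p j)‖ ^ 2 ≤ (1 + ε) * ‖p i - p j‖ ^ 2)
    (S : Fin m → Finset (Fin n)) (hS : ∀ i, (S i).card = k)
    -- barycenters and weights in the original space
    (b : Fin m → EuclideanSpace ℝ (Fin D))
    (hb : ∀ i, b i = (1 / (k : ℝ)) • ∑ l ∈ S i, p l)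
    (w : Fin m → ℝ)
    (hw : ∀ i, w i = -((1 / (k : ℝ)) * ∑ l ∈ S i, ‖b i - p l‖ ^ 2))
    -- barycenters and recomputed weights in the image space
    (b' : Fin m → EuclideanSpace ℝ (Fin d))
    (hb' : ∀ i, b' i = (1 / (k : ℝ)) • ∑ l ∈ S i, f (p l))
    (w' : Fin m → ℝ)
    (hw' : ∀ i, w' i = -((1 / (k : ℝ)) * ∑ l ∈ S i, ‖b' i - f (p l)‖ ^ 2)) :
    (1 - ε) * rad2 hm b w ≤ rad2 hm b' w' ∧
    rad2 hm b' w' ≤ (1 + ε) * rad2 hm b w := by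
  classical
  -- the probability weights
  set ν : Fin m → Fin n → ℝ := fun i l => if l ∈ S i then (1 / (k:ℝ)) else 0 with hν
  have hk : (k:ℝ) ≠ 0 := Nat.cast_ne_zero.mpr hk0.ne'
  have hν0 : ∀ i l, 0 ≤ ν i l := by
    intro i l; dsimp [ν]; split <;> positivity
  have hind : ∀ (i : Fin m) (g : Fin n → ℝ),
      ∑ l, ν i l * g l = (1 / (k:ℝ)) * ∑ l ∈ S i, g l := by
    intro i g
    rw [Finset.mul_sum]
    rw [show (∑ l, ν i l * g l) = ∑ l, (if l ∈ S i then (1/(k:ℝ)) * g l else 0) from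
      Finset.sum_congr rfl fun l _ => by dsimp [ν]; split <;> simp]
    rw [Finset.sum_ite_mem, Finset.univ_inter]
  have hν1 : ∀ i, ∑ l, ν i l = 1 := by
    intro i
    have := hind i (fun _ => 1)
    simp only [mul_one] at this
    rw [this, Finset.sum_const, hS i, nsmul_eq_mul, mul_one]
    field_simp
  have hindsmul : ∀ (i : Fin m) {F : Type} [AddCommGroup F] [Module ℝ F]
      (g : Fin n → F), ∑ l, ν i l • g l = (1 / (k:ℝ)) • ∑ l ∈ S i, g l := by
    intro i F _ _ g
    rw [Finset.smul_sum]
    rw [show (∑ l, ν i l • g l) = ∑ l, (if l ∈ S i then (1/(k:ℝ)) • g l else 0) from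
      Finset.sum_congr rfl fun l _ => by dsimp [ν]; split <;> simp]
    rw [Finset.sum_ite_mem, Finset.univ_inter]
  set hne : (Finset.univ : Finset (Fin m)).Nonempty := Finset.univ_nonempty_iff.mpr ⟨⟨0, hm⟩⟩
  -- identify rad2 with the D-form, original space
  have hbary : ∀ i, ∑ l, ν i l • p l = b i := by
    intro i; rw [hindsmul i p, hb i]
  have hrad : rad2 hm b w
      = ⨅ x : EuclideanSpace ℝ (Fin D), Finset.univ.sup' hne
          (fun i => ∑ l, ν i l * ‖x - p l‖ ^ 2) := by
    refine iInf_congr fun x => ?_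
    refine Finset.sup'_congr hne rfl fun i _ => ?_
    have h1 := bary_identity p (ν i) (hν1 i) x
    simp_rw [hbary i] at h1
    rw [h1, hw i, hind i (fun l => ‖b i - p l‖ ^ 2)]
    ring
  -- identify rad2 with the D-form, image space
  have hbary' : ∀ i, ∑ l, ν i l • f (p l) = b' i := by
    intro i; rw [hindsmul i (fun l => f (p l)), hb' i]
  have hrad' : rad2 hm b' w'
      = ⨅ x : EuclideanSpace ℝ (Fin d), Finset.univ.sup' hne
          (fun i => ∑ l, ν i l * ‖x - f (p l)‖ ^ 2) := by
    refine iInf_congr fun x => ?_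
    refine Finset.sup'_congr hne rfl fun i _ => ?_
    have h1 := bary_identity (fun l => f (p l)) (ν i) (hν1 i) x
    simp_rw [hbary' i] at h1
    rw [h1, hw' i, hind i (fun l => ‖b' i - f (p l)‖ ^ 2)]
    ring
  -- apply duality in both spaces
  obtain ⟨lam, hlammem, heq, hmax⟩ := duality hm hne p ν hν0 hν1
  obtain ⟨lam', hlammem', heq', hmax'⟩ := duality hm hne (fun l => f (p l)) ν hν0 hν1
  rw [hrad, heq, hrad', heq']
  -- comparison of pairG values
  have hcomp : ∀ lam0 ∈ stdSimplex ℝ (Fin m),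
      (1 - ε) * pairG p (fun l => ∑ i, lam0 i * ν i l)
        ≤ pairG (fun l => f (p l)) (fun l => ∑ i, lam0 i * ν i l) ∧
      pairG (fun l => f (p l)) (fun l => ∑ i, lam0 i * ν i l)
        ≤ (1 + ε) * pairG p (fun l => ∑ i, lam0 i * ν i l) := by
    intro lam0 hlam0
    have hμnn : ∀ l, 0 ≤ ∑ i, lam0 i * ν i l := fun l =>
      Finset.sum_nonneg fun i _ => mul_nonneg (hlam0.1 i) (hν0 i l)
    set μ := fun l => ∑ i, lam0 i * ν i l
    constructor
    · show (1 - ε) * ((1/2) * ∑ l, ∑ l', μ l * μ l' * ‖p l - p l'‖ ^ 2)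
        ≤ (1/2) * ∑ l, ∑ l', μ l * μ l' * ‖f (p l) - f (p l')‖ ^ 2
      have hA : ∑ l, ∑ l', μ l * μ l' * ((1 - ε) * ‖p l - p l'‖ ^ 2)
          ≤ ∑ l, ∑ l', μ l * μ l' * ‖f (p l) - f (p l')‖ ^ 2 :=
        Finset.sum_le_sum fun l _ => Finset.sum_le_sum fun l' _ =>
          mul_le_mul_of_nonneg_left (hf l l').1 (mul_nonneg (hμnn l) (hμnn l'))
      have hB : (1 - ε) * ∑ l, ∑ l', μ l * μ l' * ‖p l - p l'‖ ^ 2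
          = ∑ l, ∑ l', μ l * μ l' * ((1 - ε) * ‖p l - p l'‖ ^ 2) := by
        rw [Finset.mul_sum]
        exact Finset.sum_congr rfl fun l _ => by
          rw [Finset.mul_sum]; exact Finset.sum_congr rfl fun l' _ => by ring
      linarith
    · show (1/2) * ∑ l, ∑ l', μ l * μ l' * ‖f (p l) - f (p l')‖ ^ 2
        ≤ (1 + ε) * ((1/2) * ∑ l, ∑ l', μ l * μ l' * ‖p l - p l'‖ ^ 2)
      have hA : ∑ l, ∑ l', μ l * μ l' * ‖f (p l) - f (p l')‖ ^ 2
          ≤ ∑ l, ∑ l', μ l * μ l' * ((1 + ε) * ‖p l - p l'‖ ^ 2) :=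
        Finset.sum_le_sum fun l _ => Finset.sum_le_sum fun l' _ =>
          mul_le_mul_of_nonneg_left (hf l l').2 (mul_nonneg (hμnn l) (hμnn l'))
      have hB : (1 + ε) * ∑ l, ∑ l', μ l * μ l' * ‖p l - p l'‖ ^ 2
          = ∑ l, ∑ l', μ l * μ l' * ((1 + ε) * ‖p l - p l'‖ ^ 2) := by
        rw [Finset.mul_sum]
        exact Finset.sum_congr rfl fun l _ => by
          rw [Finset.mul_sum]; exact Finset.sum_congr rfl fun l' _ => by ring
      linarith
  have h1 := hcomp lam hlammem
  have h2 := hcomp lam' hlammem'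
  constructor
  · calc (1 - ε) * pairG p (fun l => ∑ i, lam i * ν i l)
        ≤ pairG (fun l => f (p l)) (fun l => ∑ i, lam i * ν i l) := h1.1
      _ ≤ pairG (fun l => f (p l)) (fun l => ∑ i, lam' i * ν i l) := hmax' lam hlammem
  · calc pairG (fun l => f (p l)) (fun l => ∑ i, lam' i * ν i l)
        ≤ (1 + ε) * pairG p (fun l => ∑ i, lam' i * ν i l) := h2.2
      _ ≤ (1 + ε) * pairG p (fun l => ∑ i, lam i * ν i l) := by
          refine mul_le_mul_of_nonneg_left (hmax lam' hlammem') (by linarith)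
end

section
/- Let P ⊂ ℝ^D be finite and define the approximate k-distance d̃_{P,k}(x) = min_{p∈P} sqrt(‖x−p‖² + d²_{P,k}(p)). Then for all x ∈ ℝ^D, (1/√2)·d_{P,k}(x) ≤ d̃_{P,k}(x) ≤ √3·d_{P,k}(x). -/
open Finset

/-- The squared `k`-distance of `x` to the point family `p`. -/
noncomputable def kDist2 {n : ℕ} {E : Type*} [NormedAddCommGroup E]
    (p : Fin n → E) (k : ℕ) (hk : k ≤ n) (x : E) : ℝ :=
  ((Finset.univ : Finset (Fin n)).powersetCard k).inf'
    (Finset.powersetCard_nonempty.mpr (by simpa using hk))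
    (fun S => (1 / (k : ℝ)) * ∑ i ∈ S, ‖x - p i‖ ^ 2)

lemma kDist2_le {n : ℕ} {E : Type*} [NormedAddCommGroup E]
    (p : Fin n → E) (k : ℕ) (hk : k ≤ n) (x : E)
    (S : Finset (Fin n)) (hS : S.card = k) :
    kDist2 p k hk x ≤ (1 / (k:ℝ)) * ∑ i ∈ S, ‖x - p i‖ ^ 2 :=
  Finset.inf'_le _ (by simp [Finset.mem_powersetCard, hS])

lemma kDist2_exists {n : ℕ} {E : Type*} [NormedAddCommGroup E]
    (p : Fin n → E) (k : ℕ) (hk : k ≤ n) (x : E) :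
    ∃ S : Finset (Fin n), S.card = k ∧
      kDist2 p k hk x = (1 / (k:ℝ)) * ∑ i ∈ S, ‖x - p i‖ ^ 2 := by
  obtain ⟨S, hS, h⟩ := Finset.exists_mem_eq_inf'
    (s := (Finset.univ : Finset (Fin n)).powersetCard k)
    (Finset.powersetCard_nonempty.mpr (by simpa using hk))
    (fun S => (1 / (k : ℝ)) * ∑ i ∈ S, ‖x - p i‖ ^ 2)
  exact ⟨S, (Finset.mem_powersetCard.mp hS).2, h⟩

lemma kDist2_nonneg {n : ℕ} {E : Type*} [NormedAddCommGroup E]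
    (p : Fin n → E) (k : ℕ) (hk : k ≤ n) (x : E) :
    0 ≤ kDist2 p k hk x := by
  obtain ⟨S, hS, h⟩ := kDist2_exists p k hk x
  rw [h]; positivity

lemma double_sum_le {ι : Type*} {D : ℕ} (S : Finset ι) (u : ι → EuclideanSpace ℝ (Fin D)) :
    ∑ j ∈ S, ∑ l ∈ S, ‖u j - u l‖ ^ 2 ≤ 2 * S.card * ∑ j ∈ S, ‖u j‖ ^ 2 := by
  have key : ∑ j ∈ S, ∑ l ∈ S, ‖u j - u l‖ ^ 2
      = 2 * S.card * ∑ j ∈ S, ‖u j‖^2 - 2 * ‖∑ j ∈ S, u j‖^2 := by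
    simp only [norm_sub_sq_real, Finset.sum_add_distrib, Finset.sum_sub_distrib,
      Finset.sum_const, smul_eq_mul, nsmul_eq_mul, ← Finset.mul_sum,
      ← inner_sum, ← sum_inner, real_inner_self_eq_norm_sq, ← Finset.sum_mul]
    ring
  rw [key]
  nlinarith [sq_nonneg ‖∑ j ∈ S, u j‖]

theorem stmt_12 {D n k : ℕ} (hn : 0 < n) (hk0 : 0 < k) (hk : k ≤ n)
    (p : Fin n → EuclideanSpace ℝ (Fin D)) (x : EuclideanSpace ℝ (Fin D)) :
    (1 / Real.sqrt 2) * Real.sqrt (kDist2 p k hk x) ≤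
      Real.sqrt (Finset.univ.inf' (Finset.univ_nonempty_iff.mpr ⟨⟨0, hn⟩⟩)
        (fun i => ‖x - p i‖ ^ 2 + kDist2 p k hk (p i))) ∧
    Real.sqrt (Finset.univ.inf' (Finset.univ_nonempty_iff.mpr ⟨⟨0, hn⟩⟩)
        (fun i => ‖x - p i‖ ^ 2 + kDist2 p k hk (p i))) ≤
      Real.sqrt 3 * Real.sqrt (kDist2 p k hk x) := by
  have hne : (Finset.univ : Finset (Fin n)).Nonempty := Finset.univ_nonempty_iff.mpr ⟨⟨0, hn⟩⟩
  set d2x := kDist2 p k hk x with hd2x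
  set M := Finset.univ.inf' (Finset.univ_nonempty_iff.mpr ⟨⟨0, hn⟩⟩)
      (fun i => ‖x - p i‖ ^ 2 + kDist2 p k hk (p i)) with hMdef
  have hkR : (0:ℝ) < (k:ℝ) := by exact_mod_cast hk0
  have hM0 : 0 ≤ M := by
    apply Finset.le_inf' _ _ fun i _ => ?_
    have := kDist2_nonneg p k hk (p i)
    positivity
  have hd2x0 : 0 ≤ d2x := kDist2_nonneg p k hk x
  -- Lower bound: d2x ≤ 2 * M
  have hlow : d2x ≤ 2 * M := by
    have : d2x / 2 ≤ M := by
      apply Finset.le_inf' _ _ fun i _ => ?_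
      obtain ⟨S, hScard, hSval⟩ := kDist2_exists p k hk (p i)
      have h1 := kDist2_le p k hk x S hScard
      have h2 : ∑ j ∈ S, ‖x - p j‖^2 ≤ ∑ j ∈ S, (2*‖x - p i‖^2 + 2*‖p i - p j‖^2) :=
        Finset.sum_le_sum fun j _ => by
          have h' : x - p j = (x - p i) + (p i - p j) := by abel
          have ht := norm_add_le (x - p i) (p i - p j)
          rw [h']
          have hc2 := pow_le_pow_left₀ (norm_nonneg _) ht 2
          nlinarith [sq_nonneg (‖x - p i‖ - ‖p i - p j‖)]
      have h3 : ∑ j ∈ S, (2*‖x - p i‖^2 + 2*‖p i - p j‖^2)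
          = 2*(k:ℝ)*‖x - p i‖^2 + 2*∑ j ∈ S, ‖p i - p j‖^2 := by
        rw [Finset.sum_add_distrib, Finset.sum_const, hScard, nsmul_eq_mul, ← Finset.mul_sum]
        ring
      have : d2x ≤ 2*(‖x - p i‖^2 + kDist2 p k hk (p i)) := by
        rw [hSval]
        calc d2x ≤ (1/(k:ℝ)) * ∑ j ∈ S, ‖x - p j‖^2 := h1
          _ ≤ (1/(k:ℝ)) * (2*(k:ℝ)*‖x - p i‖^2 + 2*∑ j ∈ S, ‖p i - p j‖^2) := by
              rw [← h3]; apply mul_le_mul_of_nonneg_left h2 (by positivity)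
          _ = 2*(‖x - p i‖^2 + (1/(k:ℝ)) * ∑ j ∈ S, ‖p i - p j‖^2) := by
              field_simp
      linarith
    linarith
  -- Upper bound: M ≤ 3 * d2x
  have hup : M ≤ 3 * d2x := by
    obtain ⟨S, hScard, hSval⟩ := kDist2_exists p k hk x
    have hSM : ∀ j ∈ S, M ≤ ‖x - p j‖^2 + kDist2 p k hk (p j) := fun j _ =>
      Finset.inf'_le _ (Finset.mem_univ j)
    have havg : (k:ℝ) * M ≤ ∑ j ∈ S, (‖x - p j‖^2 + kDist2 p k hk (p j)) := by
      calc (k:ℝ) * M = ∑ _j ∈ S, M := by rw [Finset.sum_const, hScard, nsmul_eq_mul]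
        _ ≤ _ := Finset.sum_le_sum hSM
    have hdd : ∑ j ∈ S, kDist2 p k hk (p j) ≤ 2 * (k:ℝ) * d2x := by
      have h1 : ∀ j ∈ S, kDist2 p k hk (p j) ≤ (1/(k:ℝ)) * ∑ l ∈ S, ‖p j - p l‖^2 :=
        fun j _ => kDist2_le p k hk (p j) S hScard
      have h2 : ∑ j ∈ S, ∑ l ∈ S, ‖p j - p l‖^2 ≤ 2 * (k:ℝ) * ∑ j ∈ S, ‖x - p j‖^2 := by
        have := double_sum_le S (fun j => p j - x)
        rw [hScard] at this
        calc ∑ j ∈ S, ∑ l ∈ S, ‖p j - p l‖^2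
            = ∑ j ∈ S, ∑ l ∈ S, ‖(p j - x) - (p l - x)‖^2 := by
              congr 1; ext j; congr 1; ext l; congr 2; abel
          _ ≤ 2 * (k:ℝ) * ∑ j ∈ S, ‖p j - x‖^2 := this
          _ = 2 * (k:ℝ) * ∑ j ∈ S, ‖x - p j‖^2 := by
              congr 1; exact Finset.sum_congr rfl fun j _ => by rw [norm_sub_rev]
      calc ∑ j ∈ S, kDist2 p k hk (p j)
          ≤ ∑ j ∈ S, (1/(k:ℝ)) * ∑ l ∈ S, ‖p j - p l‖^2 := Finset.sum_le_sum h1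
        _ = (1/(k:ℝ)) * ∑ j ∈ S, ∑ l ∈ S, ‖p j - p l‖^2 := by rw [Finset.mul_sum]
        _ ≤ (1/(k:ℝ)) * (2 * (k:ℝ) * ∑ j ∈ S, ‖x - p j‖^2) := by
            apply mul_le_mul_of_nonneg_left h2 (by positivity)
        _ = 2 * (k:ℝ) * ((1/(k:ℝ)) * ∑ j ∈ S, ‖x - p j‖^2) := by field_simp
        _ = 2 * (k:ℝ) * d2x := by rw [← hSval]
    have hsum : ∑ j ∈ S, (‖x - p j‖^2 + kDist2 p k hk (p j))
        = (k:ℝ) * d2x + ∑ j ∈ S, kDist2 p k hk (p j) := by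
      rw [Finset.sum_add_distrib]
      congr 1
      rw [hd2x, hSval]; field_simp
    have : (k:ℝ) * M ≤ (k:ℝ) * (3 * d2x) := by
      rw [hsum] at havg; nlinarith
    exact le_of_mul_le_mul_left (by linarith [this]) hkR
  constructor
  · have h2pos : (0:ℝ) < Real.sqrt 2 := Real.sqrt_pos.mpr (by norm_num)
    have hs : Real.sqrt d2x ≤ Real.sqrt 2 * Real.sqrt M := by
      rw [← Real.sqrt_mul (by norm_num : (0:ℝ) ≤ 2)]
      exact Real.sqrt_le_sqrt hlow
    calc (1 / Real.sqrt 2) * Real.sqrt d2x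
        ≤ (1 / Real.sqrt 2) * (Real.sqrt 2 * Real.sqrt M) := by
          apply mul_le_mul_of_nonneg_left hs (by positivity)
      _ = Real.sqrt M := by field_simp
  · calc Real.sqrt M ≤ Real.sqrt (3 * d2x) := Real.sqrt_le_sqrt hup
      _ = Real.sqrt 3 * Real.sqrt d2x := Real.sqrt_mul (by norm_num) _
end

section
/- Let X̂ be a finite set of weighted points in ℝ^D with weights assigned by a weighting function, and f : ℝ^D → ℝ^d a map such that for every subset Ŝ ⊆ X̂, (1−ε)·rad²(Ŝ) ≤ rad²(f(S)^) ≤ (1+ε)·rad²(Ŝ), where image weights are recomputed. Then for every α ≥ 0 and every simplex σ: if σ is in the weighted Čech complex of X̂ at parameter α·√(1−ε), then f(σ) is in the weighted Čech complex of f(X̂) at parameter α, and if f(σ) is in the weighted Čech complex of f(X̂) at parameter α, then σ is in the weighted Čech complex of X̂ at parameter α/√(1−ε). Hence the two weighted Čech filtrations are multiplicatively (1−ε)^{−1/2}-interleaved. -/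
open Finset

/-- The squared radius of a nonempty finite family of weighted points:
the infimum over centers of the maximum power distance. -/
noncomputable def rad2On {E : Type*} [NormedAddCommGroup E] {ι : Type*}
    (σ : Finset ι) (hσ : σ.Nonempty) (p : ι → E) (w : ι → ℝ) : ℝ :=
  ⨅ x : E, σ.sup' hσ (fun i => ‖x - p i‖ ^ 2 - w i)

/-- A simplex `σ` belongs to the weighted Čech complex at parameter `α`
iff its weighted squared radius is at most `α ^ 2`. -/
def memCech {E : Type*} [NormedAddCommGroup E] {ι : Type*}
    (σ : Finset ι) (hσ : σ.Nonempty) (p : ι → E) (w : ι → ℝ) (α : ℝ) : Prop :=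
  rad2On σ hσ p w ≤ α ^ 2

theorem stmt_14 {D d m : ℕ} (ε : ℝ) (hε0 : 0 < ε) (hε1 : ε < 1)
    (p : Fin m → EuclideanSpace ℝ (Fin D)) (w : Fin m → ℝ)
    (f : EuclideanSpace ℝ (Fin D) → EuclideanSpace ℝ (Fin d))
    (w' : Fin m → ℝ)  -- recomputed weights of the image points
    (hpres : ∀ (σ : Finset (Fin m)) (hσ : σ.Nonempty),
      (1 - ε) * rad2On σ hσ p w ≤ rad2On σ hσ (fun i => f (p i)) w' ∧
      rad2On σ hσ (fun i => f (p i)) w' ≤ (1 + ε) * rad2On σ hσ p w) :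
    ∀ α : ℝ, 0 ≤ α → ∀ (σ : Finset (Fin m)) (hσ : σ.Nonempty),
      (memCech σ hσ p w (α * Real.sqrt (1 - ε)) →
        memCech σ hσ (fun i => f (p i)) w' α) ∧
      (memCech σ hσ (fun i => f (p i)) w' α →
        memCech σ hσ p w (α / Real.sqrt (1 - ε))) := by
  intro α hα σ hσ
  have h1ε : (0:ℝ) < 1 - ε := by linarith
  have hs : Real.sqrt (1 - ε) ^ 2 = 1 - ε := Real.sq_sqrt h1ε.le
  have hspos : 0 < Real.sqrt (1 - ε) := Real.sqrt_pos.mpr h1ε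
  obtain ⟨hlo, hhi⟩ := hpres σ hσ
  constructor
  · intro h
    unfold memCech at h ⊢
    rw [mul_pow, hs] at h
    nlinarith [sq_nonneg α, sq_nonneg (α * ε)]
  · intro h
    unfold memCech at h ⊢
    rw [div_pow, hs, le_div_iff₀ h1ε]
    nlinarith
end

section
/- For a finite set P = {p₁,…,p_m} of (unweighted) points in ℝ^D, the squared circumradius of the minimum enclosing ball satisfies rad²(P) = (1/2) Σ_{i,j∈I} λᵢλⱼ ‖pᵢ − pⱼ‖², where c = Σ_{i∈I} λᵢ pᵢ is the center of the minimum enclosing ball expressed as a convex combination of the points I on its boundary. -/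
open Finset

theorem stmt_15 {D m : ℕ}
    (p : Fin m → EuclideanSpace ℝ (Fin D))
    (hne : (Finset.univ : Finset (Fin m)).Nonempty)
    (c : EuclideanSpace ℝ (Fin D))
    (hc : ∀ y, Finset.univ.sup' hne (fun i => ‖c - p i‖ ^ 2) ≤
          Finset.univ.sup' hne (fun i => ‖y - p i‖ ^ 2))
    (I : Finset (Fin m))
    (hI : I = Finset.univ.filter (fun i =>
      ‖c - p i‖ ^ 2 = Finset.univ.sup' hne (fun j => ‖c - p j‖ ^ 2)))
    (lam : Fin m → ℝ) (hpos : ∀ i ∈ I, 0 < lam i)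
    (hsum : ∑ i ∈ I, lam i = 1) (hcc : c = ∑ i ∈ I, lam i • p i) :
    Finset.univ.sup' hne (fun i => ‖c - p i‖ ^ 2) =
      (1 / 2) * ∑ i ∈ I, ∑ j ∈ I, lam i * lam j * ‖p i - p j‖ ^ 2 := by
  set r2 := Finset.univ.sup' hne (fun i => ‖c - p i‖ ^ 2) with hr2
  have hmem : ∀ i ∈ I, ‖c - p i‖ ^ 2 = r2 := by
    intro i hi; rw [hI] at hi; exact (Finset.mem_filter.mp hi).2
  have hzero : ∑ j ∈ I, lam j • (c - p j) = 0 := by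
    have : ∑ j ∈ I, lam j • (c - p j) = (∑ j ∈ I, lam j) • c - ∑ j ∈ I, lam j • p j := by
      rw [Finset.sum_smul]
      rw [← Finset.sum_sub_distrib]
      exact Finset.sum_congr rfl fun j _ => by rw [smul_sub]
    rw [this, hsum, one_smul, ← hcc, sub_self]
  have hsq : ∀ i ∈ I, ∀ j ∈ I, lam i * lam j * ‖p i - p j‖ ^ 2
      = lam i * lam j * (2 * r2) + 2 * (lam i * (lam j * (inner ℝ (p i - c) (c - p j) : ℝ))) := by
    intro i hi j hj
    have e : p i - p j = (p i - c) + (c - p j) := by abel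
    have hA : ‖p i - c‖ ^ 2 = r2 := by rw [norm_sub_rev]; exact hmem i hi
    rw [e, norm_add_sq_real, hA, hmem j hj]
    ring
  have hinner : ∀ i : Fin m, ∑ j ∈ I, lam j * (inner ℝ (p i - c) (c - p j) : ℝ) = 0 := by
    intro i
    calc ∑ j ∈ I, lam j * (inner ℝ (p i - c) (c - p j) : ℝ)
        = ∑ j ∈ I, (inner ℝ (p i - c) (lam j • (c - p j)) : ℝ) := by
          exact Finset.sum_congr rfl fun j _ => (real_inner_smul_right _ _ _).symm
      _ = (inner ℝ (p i - c) (∑ j ∈ I, lam j • (c - p j)) : ℝ) :=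
          (inner_sum I (fun j => lam j • (c - p j)) (p i - c)).symm
      _ = 0 := by rw [hzero, inner_zero_right]
  have hsum2 : ∑ i ∈ I, ∑ j ∈ I, lam i * lam j * ‖p i - p j‖ ^ 2 = 2 * r2 := by
    calc ∑ i ∈ I, ∑ j ∈ I, lam i * lam j * ‖p i - p j‖ ^ 2
        = ∑ i ∈ I, ∑ j ∈ I, (lam i * lam j * (2 * r2)
            + 2 * (lam i * (lam j * (inner ℝ (p i - c) (c - p j) : ℝ)))) :=
          Finset.sum_congr rfl fun i hi => Finset.sum_congr rfl fun j hj => hsq i hi j hj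
      _ = ∑ i ∈ I, ((∑ j ∈ I, lam i * lam j * (2 * r2))
            + 2 * (lam i * ∑ j ∈ I, lam j * (inner ℝ (p i - c) (c - p j) : ℝ))) := by
          refine Finset.sum_congr rfl fun i _ => ?_
          rw [Finset.sum_add_distrib, Finset.mul_sum, Finset.mul_sum]
      _ = ∑ i ∈ I, ∑ j ∈ I, lam i * lam j * (2 * r2) := by
          refine Finset.sum_congr rfl fun i _ => ?_
          rw [hinner i]; ring
      _ = (∑ i ∈ I, lam i) * (∑ j ∈ I, lam j) * (2 * r2) := by
          rw [Finset.sum_mul_sum, Finset.sum_mul]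
          exact Finset.sum_congr rfl fun i _ => (Finset.sum_mul _ _ _).symm
      _ = 2 * r2 := by rw [hsum]; ring
  rw [hsum2]; ring
end

section
/- Suppose a subset I of weighted points of X̂ achieves the max power distance at the center c, i.e. D(c, p̂ᵢ) = rad²(X̂) for i ∈ I and D(c, p̂ⱼ) < rad²(X̂) for j ∉ I. If c were not in the convex hull of {pᵢ : i ∈ I}, then moving c slightly toward its projection onto that convex hull strictly decreases max_i D(·, p̂ᵢ), contradicting minimality. Formally: if c minimizes x ↦ max_i D(x, p̂ᵢ) over ℝ^D, then c ∈ conv{pᵢ : i ∈ I}. -/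
open Finset Filter Topology RealInnerProductSpace

theorem stmt_16 {D m : ℕ}
    (p : Fin m → EuclideanSpace ℝ (Fin D)) (w : Fin m → ℝ)
    (hne : (Finset.univ : Finset (Fin m)).Nonempty)
    (c : EuclideanSpace ℝ (Fin D))
    (hmin : ∀ y, Finset.univ.sup' hne (fun i => ‖c - p i‖ ^ 2 - w i) ≤
          Finset.univ.sup' hne (fun i => ‖y - p i‖ ^ 2 - w i))
    (I : Finset (Fin m))
    (hI : ∀ i, i ∈ I ↔
      ‖c - p i‖ ^ 2 - w i = Finset.univ.sup' hne (fun j => ‖c - p j‖ ^ 2 - w j)) :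
    c ∈ convexHull ℝ (p '' {i : Fin m | i ∈ I}) := by
  classical
  by_contra hc
  set S : ℝ := Finset.univ.sup' hne (fun i => ‖c - p i‖ ^ 2 - w i) with hS
  obtain ⟨i0, -, hi0⟩ := Finset.exists_mem_eq_sup' hne (fun i => ‖c - p i‖ ^ 2 - w i)
  have hI0 : i0 ∈ I := (hI i0).2 hi0.symm
  set K : Set (EuclideanSpace ℝ (Fin D)) := convexHull ℝ (p '' {i : Fin m | i ∈ I}) with hK
  have hKconv : Convex ℝ K := convex_convexHull _ _
  have hKne : K.Nonempty := ⟨p i0, subset_convexHull _ _ ⟨i0, hI0, rfl⟩⟩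
  have hKcompact : IsCompact K := (Set.toFinite (p '' {i : Fin m | i ∈ I})).isCompact_convexHull ℝ
  have hKcomplete : IsComplete K := hKcompact.isClosed.isComplete
  obtain ⟨y, hyK, hy⟩ := exists_norm_eq_iInf_of_complete_convex hKne hKcomplete hKconv c
  have hproj : ∀ z ∈ K, ⟪c - y, z - y⟫ ≤ 0 :=
    (norm_eq_iInf_iff_real_inner_le_zero hKconv hyK).1 hy
  set v : EuclideanSpace ℝ (Fin D) := y - c with hv
  have hvne : v ≠ 0 := sub_ne_zero.2 (fun h => hc (h ▸ hyK))
  have hv2 : 0 < ‖v‖ ^ 2 := pow_pos (norm_pos_iff.mpr hvne) 2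
  have hinner : ∀ i ∈ I, ‖v‖ ^ 2 ≤ ⟪v, p i - c⟫ := by
    intro i hi
    have h1 : ⟪c - y, p i - y⟫ ≤ 0 := hproj _ (subset_convexHull _ _ ⟨i, hi, rfl⟩)
    have h2 : ⟪v, p i - c⟫ = ⟪v, p i - y⟫ + ⟪v, v⟫ := by
      rw [← inner_add_right]
      congr 1
      rw [hv]; abel
    have h3 : ⟪v, p i - y⟫ = -⟪c - y, p i - y⟫ := by
      rw [hv, ← inner_neg_left, neg_sub]
    rw [h2, h3, real_inner_self_eq_norm_sq]
    linarith
  have hexp : ∀ (t : ℝ) (i : Fin m),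
      ‖(c + t • v) - p i‖ ^ 2 = ‖c - p i‖ ^ 2 - 2 * t * ⟪v, p i - c⟫ + t ^ 2 * ‖v‖ ^ 2 := by
    intro t i
    have h1 : (c + t • v) - p i = (c - p i) + t • v := by abel
    have h2 : ⟪c - p i, t • v⟫ = -(t * ⟪v, p i - c⟫) := by
      rw [real_inner_smul_right, real_inner_comm]
      have hpc : c - p i = -(p i - c) := by abel
      rw [hpc, inner_neg_right]; ring
    rw [h1, norm_add_sq_real, h2, norm_smul, mul_pow, Real.norm_eq_abs, sq_abs]
    ring
  have hslack : ∀ i, i ∉ I → ‖c - p i‖ ^ 2 - w i < S := by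
    intro i hi
    exact lt_of_le_of_ne (Finset.le_sup' (fun j => ‖c - p j‖ ^ 2 - w j) (Finset.mem_univ i)) (fun h => hi ((hI i).2 h))
  have hev : ∀ i : Fin m, ∀ᶠ t in 𝓝 (0 : ℝ), i ∉ I → ‖(c + t • v) - p i‖ ^ 2 - w i < S := by
    intro i
    by_cases hi : i ∈ I
    · filter_upwards with t h; exact absurd hi h
    · have hcont : Continuous fun t : ℝ => ‖(c + t • v) - p i‖ ^ 2 - w i := by fun_prop
      have h0 : ‖(c + (0 : ℝ) • v) - p i‖ ^ 2 - w i < S := by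
        simpa using hslack i hi
      have := (hcont.tendsto 0).eventually_lt_const h0
      filter_upwards [this] with t ht _; exact ht
  have hall : ∀ᶠ t in 𝓝 (0 : ℝ), ∀ i : Fin m, i ∉ I → ‖(c + t • v) - p i‖ ^ 2 - w i < S :=
    eventually_all.2 hev
  have h01 : Set.Ioo (0 : ℝ) 1 ∈ 𝓝[>] (0 : ℝ) :=
    Ioo_mem_nhdsGT_of_mem ⟨le_refl 0, one_pos⟩
  obtain ⟨t, ht, ht01⟩ := ((hall.filter_mono nhdsWithin_le_nhds).and h01).exists
  obtain ⟨ht0, ht1⟩ := ht01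
  have hlt : Finset.univ.sup' hne (fun i => ‖(c + t • v) - p i‖ ^ 2 - w i) < S := by
    rw [Finset.sup'_lt_iff]
    intro i _
    by_cases hi : i ∈ I
    · have hFc : ‖c - p i‖ ^ 2 - w i = S := (hI i).1 hi
      have hin := hinner i hi
      rw [hexp]
      nlinarith [hv2, mul_pos ht0 hv2, mul_le_mul_of_nonneg_left hin ht0.le, mul_pos ht0 ht0]
    · exact ht i hi
  exact absurd (hmin (c + t • v)) (not_le.2 hlt)
end

section
/- Let P ⊂ ℝ^D be finite, and let f : ℝ^D → ℝ^d satisfy (1−ε)‖x−y‖ ≤ ‖f(x)−f(y)‖ ≤ (1+ε)‖x−y‖ for all x,y ∈ P. Then for all x, y ∈ P, the k-distance-based Vietoris–Rips filtration value of the pair, namely the power distance between the weighted points (x, −d²_{P,k}(x)) and (y, −d²_{P,k}(y)) with recomputed image weights, satisfies (1−ε)²·(‖x−y‖² + d²_{P,k}(x) + d²_{P,k}(y)) ≤ ‖f(x)−f(y)‖² + d²_{f(P),k}(f(x)) + d²_{f(P),k}(f(y)) ≤ (1+ε)²·(‖x−y‖² + d²_{P,k}(x) + d²_{P,k}(y)).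 -/
open Finset

theorem stmt_18 {D d n k : ℕ} (hk0 : 0 < k) (hk : k ≤ n)
    (ε : ℝ) (hε0 : 0 < ε) (hε1 : ε < 1)
    (p : Fin n → EuclideanSpace ℝ (Fin D))
    (f : EuclideanSpace ℝ (Fin D) →ₗ[ℝ] EuclideanSpace ℝ (Fin d))
    (hf : ∀ i j : Fin n,
      (1 - ε) * ‖p i - p j‖ ≤ ‖f (p i) - f (p j)‖ ∧
      ‖f (p i) - f (p j)‖ ≤ (1 + ε) * ‖p i - p j‖) :
    ∀ i j : Fin n,
      (1 - ε) ^ 2 *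
          (‖p i - p j‖ ^ 2 + kDist2 p k hk (p i) + kDist2 p k hk (p j)) ≤
        ‖f (p i) - f (p j)‖ ^ 2 + kDist2 (fun l => f (p l)) k hk (f (p i)) +
          kDist2 (fun l => f (p l)) k hk (f (p j)) ∧
      ‖f (p i) - f (p j)‖ ^ 2 + kDist2 (fun l => f (p l)) k hk (f (p i)) +
          kDist2 (fun l => f (p l)) k hk (f (p j)) ≤
        (1 + ε) ^ 2 *
          (‖p i - p j‖ ^ 2 + kDist2 p k hk (p i) + kDist2 p k hk (p j)) := by
  have hkinv : (0:ℝ) ≤ 1 / (k : ℝ) := by positivity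
  have key : ∀ a b : Fin n,
      (1 - ε) ^ 2 * ‖p a - p b‖ ^ 2 ≤ ‖f (p a) - f (p b)‖ ^ 2 ∧
      ‖f (p a) - f (p b)‖ ^ 2 ≤ (1 + ε) ^ 2 * ‖p a - p b‖ ^ 2 := by
    intro a b
    obtain ⟨h1, h2⟩ := hf a b
    constructor
    · rw [← mul_pow]
      exact pow_le_pow_left₀ (mul_nonneg (by linarith) (norm_nonneg _)) h1 2
    · rw [← mul_pow]
      exact pow_le_pow_left₀ (norm_nonneg _) h2 2
  have kb : ∀ x : Fin n,
      (1 - ε) ^ 2 * kDist2 p k hk (p x) ≤ kDist2 (fun l => f (p l)) k hk (f (p x)) ∧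
      kDist2 (fun l => f (p l)) k hk (f (p x)) ≤ (1 + ε) ^ 2 * kDist2 p k hk (p x) := by
    intro x
    have hne : (((Finset.univ : Finset (Fin n)).powersetCard k)).Nonempty :=
      Finset.powersetCard_nonempty.mpr (by simpa using hk)
    have hsum : ∀ S : Finset (Fin n),
        (1 - ε) ^ 2 * ((1 / (k : ℝ)) * ∑ l ∈ S, ‖p x - p l‖ ^ 2) ≤
          (1 / (k : ℝ)) * ∑ l ∈ S, ‖f (p x) - f (p l)‖ ^ 2 ∧
        (1 / (k : ℝ)) * ∑ l ∈ S, ‖f (p x) - f (p l)‖ ^ 2 ≤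
          (1 + ε) ^ 2 * ((1 / (k : ℝ)) * ∑ l ∈ S, ‖p x - p l‖ ^ 2) := by
      intro S
      constructor
      · rw [← mul_assoc, mul_comm ((1-ε)^2) (1/(k:ℝ)), mul_assoc]
        refine mul_le_mul_of_nonneg_left ?_ hkinv
        rw [Finset.mul_sum]
        exact Finset.sum_le_sum fun l _ => (key x l).1
      · rw [← mul_assoc, mul_comm ((1+ε)^2) (1/(k:ℝ)), mul_assoc]
        refine mul_le_mul_of_nonneg_left ?_ hkinv
        rw [Finset.mul_sum]
        exact Finset.sum_le_sum fun l _ => (key x l).2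
    constructor
    · obtain ⟨S, hS, hEq⟩ := Finset.exists_mem_eq_inf'
        hne (fun S => (1 / (k : ℝ)) * ∑ l ∈ S, ‖f (p x) - f (p l)‖ ^ 2)
      have h1 : kDist2 p k hk (p x) ≤ (1 / (k : ℝ)) * ∑ l ∈ S, ‖p x - p l‖ ^ 2 :=
        Finset.inf'_le _ hS
      have h2 := (hsum S).1
      have : kDist2 (fun l => f (p l)) k hk (f (p x)) =
          (1 / (k : ℝ)) * ∑ l ∈ S, ‖f (p x) - f (p l)‖ ^ 2 := hEq
      rw [this]
      calc (1 - ε) ^ 2 * kDist2 p k hk (p x)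
          ≤ (1 - ε) ^ 2 * ((1 / (k : ℝ)) * ∑ l ∈ S, ‖p x - p l‖ ^ 2) :=
            mul_le_mul_of_nonneg_left h1 (by positivity)
        _ ≤ _ := h2
    · obtain ⟨S, hS, hEq⟩ := Finset.exists_mem_eq_inf'
        hne (fun S => (1 / (k : ℝ)) * ∑ l ∈ S, ‖p x - p l‖ ^ 2)
      have h1 : kDist2 (fun l => f (p l)) k hk (f (p x)) ≤
          (1 / (k : ℝ)) * ∑ l ∈ S, ‖f (p x) - f (p l)‖ ^ 2 :=
        Finset.inf'_le _ hS
      have h2 := (hsum S).2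
      have hx : kDist2 p k hk (p x) = (1 / (k : ℝ)) * ∑ l ∈ S, ‖p x - p l‖ ^ 2 := hEq
      rw [hx]
      exact h1.trans h2
  intro i j
  obtain ⟨ka1, ka2⟩ := kb i
  obtain ⟨kb1, kb2⟩ := kb j
  obtain ⟨n1, n2⟩ := key i j
  constructor <;> [skip; skip] <;> nlinarith []
end
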